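/- Let C(x) = x + x² + 4x³ + ... be the generating function of connected rooted chord diagrams (satisfying 2xCC' = C(1+C) - x) and define y(x) := (x - C_{≥2}(x))²/x, where C_{≥2} is defined by C = C²/x - C_{≥2}(C²/x). Then y is the compositional inverse of x ↦ C(x)²/x, and C(y(x)) = x - C_{≥2}(x). -/

import Mathlib

open PowerSeries Finset

/-- Composition `f(g(X))` of formal power series (meaningful when `g` has zero
constant term). -/
noncomputable def pcomp (f g : ℚ⟦X⟧) : ℚ⟦X⟧ :=
  PowerSeries.mk fun n => ∑ k ∈ Finset.range (n + 1),
    PowerSeries.coeff k f * PowerSeries.coeff n (g ^ k)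

/-- Division of a power series by `X` (dropping the constant term). -/
noncomputable def shiftDiv (f : ℚ⟦X⟧) : ℚ⟦X⟧ :=
  PowerSeries.mk fun n => PowerSeries.coeff (n + 1) f


lemma coeff_pcomp (n : ℕ) (f g : ℚ⟦X⟧) :
    coeff n (pcomp f g) = ∑ k ∈ range (n + 1), coeff k f * coeff n (g ^ k) := by
  simp [pcomp]

lemma coeff_pow_eq_zero {g : ℚ⟦X⟧} (hg : constantCoeff g = 0) {k n : ℕ} (h : n < k) :
    coeff n (g ^ k) = 0 := by
  obtain ⟨b, rfl⟩ := X_dvd_iff.mpr hg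
  rw [mul_pow, coeff_X_pow_mul', if_neg (by omega)]

lemma coeff_pow_self {g : ℚ⟦X⟧} (hg : constantCoeff g = 0) (n : ℕ) :
    coeff n (g ^ n) = (coeff 1 g) ^ n := by
  obtain ⟨b, rfl⟩ := X_dvd_iff.mpr hg
  have h0 : coeff n ((X : ℚ⟦X⟧) ^ n * b ^ n) = coeff 0 (b ^ n) := by
    simpa using coeff_X_pow_mul (b ^ n) n 0
  have h1 : coeff 1 ((X : ℚ⟦X⟧) * b) = coeff 0 b := coeff_succ_X_mul 0 b
  rw [mul_pow, h0, h1]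
  simp [coeff_zero_eq_constantCoeff, map_pow]

lemma coeff_aeval (P : Polynomial ℚ) {h : ℚ⟦X⟧} (hh : constantCoeff h = 0) (n : ℕ) :
    coeff n (Polynomial.aeval h P) = ∑ k ∈ range (n + 1), P.coeff k * coeff n (h ^ k) := by
  set M := max (n + 1) (P.natDegree + 1) with hM
  have hdeg : P.natDegree < M := lt_of_lt_of_le (Nat.lt_succ_self _) (le_max_right _ _)
  rw [Polynomial.aeval_def, Polynomial.eval₂_eq_sum_range' _ hdeg]
  rw [map_sum]
  have : ∀ k ∈ range M, coeff n (algebraMap ℚ ℚ⟦X⟧ (P.coeff k) * h ^ k)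
      = P.coeff k * coeff n (h ^ k) := by
    intro k _
    rw [PowerSeries.algebraMap_apply, Algebra.algebraMap_self, RingHom.id_apply, coeff_C_mul]
  rw [Finset.sum_congr rfl this]
  refine (Finset.sum_subset (Finset.range_subset_range.2 (le_max_left _ _)) ?_).symm
  intro k _ hk
  rw [coeff_pow_eq_zero hh (by simpa using hk), mul_zero]

lemma pcomp_eq_trunc_aeval (f : ℚ⟦X⟧) {h : ℚ⟦X⟧} (hh : constantCoeff h = 0)
    {n N : ℕ} (hN : n < N) :
    coeff n (pcomp f h) = coeff n (Polynomial.aeval h (trunc N f)) := by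
  rw [coeff_aeval _ hh, coeff_pcomp]
  refine Finset.sum_congr rfl fun k hk => ?_
  rw [coeff_trunc, if_pos (lt_of_lt_of_le (Finset.mem_range.1 hk) hN)]

lemma coeff_aeval_trunc_coe (Q : Polynomial ℚ) {h : ℚ⟦X⟧} (hh : constantCoeff h = 0)
    {n N : ℕ} (hN : n < N) :
    coeff n (Polynomial.aeval h (trunc N (↑Q : ℚ⟦X⟧))) = coeff n (Polynomial.aeval h Q) := by
  rw [coeff_aeval _ hh, coeff_aeval _ hh]
  refine Finset.sum_congr rfl fun k hk => ?_
  rw [coeff_trunc, if_pos (lt_of_lt_of_le (Finset.mem_range.1 hk) hN), Polynomial.coeff_coe]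

lemma pcomp_mul (f g : ℚ⟦X⟧) {h : ℚ⟦X⟧} (hh : constantCoeff h = 0) :
    pcomp (f * g) h = pcomp f h * pcomp g h := by
  ext n
  rw [pcomp_eq_trunc_aeval _ hh (Nat.lt_succ_self n), ← trunc_trunc_mul_trunc,
    ← Polynomial.coe_mul, coeff_aeval_trunc_coe _ hh (Nat.lt_succ_self n), map_mul,
    coeff_mul, coeff_mul]
  refine Finset.sum_congr rfl fun p hp => ?_
  have hp' := Finset.HasAntidiagonal.mem_antidiagonal.1 hp
  rw [← pcomp_eq_trunc_aeval f hh (by omega : p.1 < n + 1),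
    ← pcomp_eq_trunc_aeval g hh (by omega : p.2 < n + 1)]

lemma pcomp_one (h : ℚ⟦X⟧) : pcomp 1 h = 1 := by
  ext n
  rw [coeff_pcomp]
  rw [Finset.sum_eq_single 0]
  · simp
  · intro k _ hk
    simp [coeff_one, hk]
  · intro hk
    simp at hk

lemma pcomp_pow (f : ℚ⟦X⟧) {h : ℚ⟦X⟧} (hh : constantCoeff h = 0) (m : ℕ) :
    pcomp (f ^ m) h = (pcomp f h) ^ m := by
  induction m with
  | zero => simpa using pcomp_one h
  | succ m ih => rw [pow_succ, pow_succ, pcomp_mul _ _ hh, ih]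

lemma pcomp_sub (f g h : ℚ⟦X⟧) : pcomp (f - g) h = pcomp f h - pcomp g h := by
  ext n
  simp [coeff_pcomp, sub_mul, Finset.sum_sub_distrib]

lemma pcomp_X_left {h : ℚ⟦X⟧} (hh : constantCoeff h = 0) : pcomp X h = h := by
  ext n
  rw [coeff_pcomp]
  cases n with
  | zero => simpa [coeff_zero_eq_constantCoeff] using hh.symm
  | succ m =>
    rw [Finset.sum_eq_single 1]
    · simp
    · intro k _ hk
      simp [coeff_X, hk]
    · intro hk
      exact absurd (Finset.mem_range.2 (by omega)) hk

lemma pcomp_X_right (f : ℚ⟦X⟧) : pcomp f X = f := by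
  ext n
  rw [coeff_pcomp, Finset.sum_eq_single n]
  · simp
  · intro k _ hk
    rw [coeff_X_pow, if_neg fun h => hk h.symm, mul_zero]
  · intro hk
    simp at hk

lemma constantCoeff_pcomp {g h : ℚ⟦X⟧} (hg : constantCoeff g = 0) :
    constantCoeff (pcomp g h) = 0 := by
  rw [← coeff_zero_eq_constantCoeff, coeff_pcomp, Finset.sum_range_one,
    coeff_zero_eq_constantCoeff_apply, hg, zero_mul]

lemma pcomp_assoc (f g h : ℚ⟦X⟧) (hg : constantCoeff g = 0) (hh : constantCoeff h = 0) :
    pcomp (pcomp f g) h = pcomp f (pcomp g h) := by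
  ext n
  rw [coeff_pcomp, coeff_pcomp]
  have hR : ∀ j ∈ range (n + 1), coeff j f * coeff n ((pcomp g h) ^ j)
      = ∑ k ∈ range (n + 1), coeff j f * (coeff k (g ^ j) * coeff n (h ^ k)) := by
    intro j _
    rw [← pcomp_pow _ hh, coeff_pcomp, Finset.mul_sum]
  rw [Finset.sum_congr rfl hR, Finset.sum_comm]
  refine Finset.sum_congr rfl fun k hk => ?_
  rw [coeff_pcomp, Finset.sum_mul]
  have hsub : range (k + 1) ⊆ range (n + 1) :=
    Finset.range_subset_range.2 (by simpa using Nat.succ_le_succ (Nat.lt_succ_iff.1 (Finset.mem_range.1 hk)))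
  rw [← Finset.sum_subset hsub]
  · exact Finset.sum_congr rfl fun j _ => by ring
  · intro j _ hj
    rw [coeff_pow_eq_zero hg (by simp at hj ⊢; omega)]
    ring

lemma pcomp_eq_zero {G A : ℚ⟦X⟧} (hA0 : constantCoeff A = 0) (hA1 : coeff 1 A = 1)
    (h : pcomp G A = 0) : G = 0 := by
  ext n
  induction n using Nat.strong_induction_on with
  | _ n ih =>
    have hc : coeff n (pcomp G A) = 0 := by rw [h]; simp
    rw [coeff_pcomp, Finset.sum_range_succ] at hc
    have hz : ∀ k ∈ range n, coeff k G * coeff n (A ^ k) = 0 := by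
      intro k hk
      rw [ih k (Finset.mem_range.1 hk)]
      simp
    rw [Finset.sum_eq_zero hz, zero_add, coeff_pow_self hA0, hA1, one_pow, mul_one] at hc
    simpa using hc

lemma X_mul_shiftDiv {f : ℚ⟦X⟧} (hf : constantCoeff f = 0) : X * shiftDiv f = f := by
  ext n
  cases n with
  | zero => rw [coeff_zero_X_mul, coeff_zero_eq_constantCoeff, hf]
  | succ m => rw [coeff_succ_X_mul]; simp [shiftDiv]

lemma coeff_one_sq {f : ℚ⟦X⟧} (hf : constantCoeff f = 0) : coeff 1 (f ^ 2) = 0 := by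
  rw [sq, coeff_mul]
  have h1 : (Finset.HasAntidiagonal.antidiagonal 1 : Finset (ℕ × ℕ)) = {(0, 1), (1, 0)} := rfl
  rw [h1, Finset.sum_insert (by decide), Finset.sum_singleton]
  simp only [coeff_zero_eq_constantCoeff_apply, hf]
  ring

lemma coeff_two_sq {f : ℚ⟦X⟧} (hf : constantCoeff f = 0) :
    coeff 2 (f ^ 2) = (coeff 1 f) ^ 2 := by
  rw [sq, coeff_mul]
  have : (Finset.HasAntidiagonal.antidiagonal 2 : Finset (ℕ × ℕ)) = {(0, 2), (1, 1), (2, 0)} := rfl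
  rw [this, Finset.sum_insert (by decide), Finset.sum_insert (by decide),
    Finset.sum_singleton]
  simp only [coeff_zero_eq_constantCoeff_apply, hf]
  ring

/-- With `C` the connected chord diagram series and `C_{≥2}` defined by
`C = C²/x - C_{≥2}(C²/x)`, the series `y(x) = (x - C_{≥2}(x))²/x` is the
compositional inverse of `x ↦ C(x)²/x`, and `C(y(x)) = x - C_{≥2}(x)`. -/
theorem compositional_inverse_y (C C₂ : ℚ⟦X⟧)
    (hC0 : PowerSeries.constantCoeff C = 0) (hC1 : PowerSeries.coeff 1 C = 1)
    (h20 : PowerSeries.coeff 0 C₂ = 0) (h21 : PowerSeries.coeff 1 C₂ = 0)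
    (hode : 2 * X * C * d⁄dX ℚ C = C * (1 + C) - X)
    (hfun : C = shiftDiv (C ^ 2) - pcomp C₂ (shiftDiv (C ^ 2))) :
    pcomp (shiftDiv (C ^ 2)) (shiftDiv ((X - C₂) ^ 2)) = X ∧
    pcomp (shiftDiv ((X - C₂) ^ 2)) (shiftDiv (C ^ 2)) = X ∧
    pcomp C (shiftDiv ((X - C₂) ^ 2)) = X - C₂ := by
  set A := shiftDiv (C ^ 2) with hA
  set Y := shiftDiv ((X - C₂) ^ 2) with hY
  have hCsq0 : constantCoeff (C ^ 2) = 0 := by rw [map_pow, hC0]; ring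
  have hW0 : constantCoeff (X - C₂) = 0 := by
    rw [map_sub, constantCoeff_X, ← coeff_zero_eq_constantCoeff_apply, h20]; ring
  have hWsq0 : constantCoeff ((X - C₂) ^ 2) = 0 := by rw [map_pow, hW0]; ring
  have hXA : X * A = C ^ 2 := X_mul_shiftDiv hCsq0
  have hXY : X * Y = (X - C₂) ^ 2 := X_mul_shiftDiv hWsq0
  have hA0 : constantCoeff A = 0 := by
    rw [← coeff_zero_eq_constantCoeff, hA]
    simp only [shiftDiv, coeff_mk]
    exact coeff_one_sq hC0
  have hA1 : coeff 1 A = 1 := by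
    rw [hA]
    simp only [shiftDiv, coeff_mk]
    rw [coeff_two_sq hC0, hC1]; ring
  have hY0 : constantCoeff Y = 0 := by
    rw [← coeff_zero_eq_constantCoeff, hY]
    simp only [shiftDiv, coeff_mk]
    exact coeff_one_sq hW0
  have hCW : C = pcomp (X - C₂) A := by
    rw [pcomp_sub, pcomp_X_left hA0, ← hfun]
  -- Goal 2 : pcomp Y A = X
  have goal2 : pcomp Y A = X := by
    have hAne : A ≠ 0 := fun h => by rw [h] at hA1; simp at hA1
    have key : A * pcomp Y A = A * X := by
      have h1 : pcomp (X * Y) A = pcomp X A * pcomp Y A := pcomp_mul _ _ hA0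
      rw [pcomp_X_left hA0] at h1
      rw [← h1, hXY, pcomp_pow _ hA0, ← hCW, ← hXA]
      ring
    exact mul_left_cancel₀ hAne key
  -- Goal 1 : pcomp A Y = X
  have goal1 : pcomp A Y = X := by
    have hG : pcomp (pcomp A Y - X) A = 0 := by
      rw [pcomp_sub, pcomp_assoc _ _ _ hY0 hA0, goal2, pcomp_X_right, pcomp_X_left hA0,
        sub_self]
    have := pcomp_eq_zero hA0 hA1 hG
    linear_combination (norm := abel) this
  -- Goal 3
  have goal3 : pcomp C Y = X - C₂ := by
    rw [hCW, pcomp_assoc _ _ _ hA0 hY0, goal1, pcomp_X_right]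
  exact ⟨goal1, goal2, goal3⟩
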